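/- Let {x_i}_{i∈[T]} be vectors in ℝ^d with ‖x_i‖₂ ≤ L, let Λ₀ be positive-definite, and Λ_t = Λ₀ + ∑_{i=1}^t x_i x_iᵀ. Then ∑_{i=1}^T min{1, ‖x_i‖²_{Λ_{i-1}^{-1}}} ≤ 2d·log((trace(Λ₀) + T L²)/(d·det(Λ₀)^{1/d})). -/

import Mathlib

open Matrix Real

private lemma aux_min_le_log (u : ℝ) (hu : 0 ≤ u) : min 1 u ≤ 2 * Real.log (1+u) := by
  have h1u : (0:ℝ) < 1 + u := by linarith
  have h1 : Real.log ((1+u)⁻¹) ≤ (1+u)⁻¹ - 1 := Real.log_le_sub_one_of_pos (by positivity)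
  rw [Real.log_inv] at h1
  have hlog : u/(1+u) ≤ Real.log (1+u) := by
    have h2 : (1+u)⁻¹ - 1 = -(u/(1+u)) := by field_simp; ring
    rw [h2] at h1; linarith
  rcases le_total u 1 with h | h
  · rw [min_eq_right h]
    have h2 : u ≤ 2 * (u/(1+u)) := by
      rw [mul_div_assoc', le_div_iff₀ h1u]; nlinarith
    linarith
  · rw [min_eq_left h]
    have h2 : (1:ℝ) ≤ 2 * (u/(1+u)) := by
      rw [mul_div_assoc', le_div_iff₀ h1u]; nlinarith
    linarith

private lemma aux_vecMulVec_psd {n : Type*} [Fintype n] [DecidableEq n] (v : n → ℝ) :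
    (vecMulVec v v).PosSemidef := by
  rw [vecMulVec_eq Unit]
  have := Matrix.posSemidef_self_mul_conjTranspose (replicateCol Unit v)
  simpa using this

private lemma aux_det_lemma {n : Type*} [Fintype n] [DecidableEq n] (A : Matrix n n ℝ)
    (hA : A.PosDef) (v : n → ℝ) :
    (A + vecMulVec v v).det = A.det * (1 + v ⬝ᵥ A⁻¹.mulVec v) := by
  rw [vecMulVec_eq Unit, det_add_replicateCol_mul_replicateRow hA.det_pos.ne'.isUnit]
  congr 1
  rw [det_unique]
  simp only [Matrix.add_apply, Matrix.one_apply_eq, Matrix.mul_apply, Matrix.replicateRow_apply,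
    Matrix.replicateCol_apply, dotProduct, Matrix.mulVec, dotProduct, Finset.sum_mul, Finset.mul_sum]
  rw [Finset.sum_comm]
  congr 1
  refine Finset.sum_congr rfl fun i _ => Finset.sum_congr rfl fun j _ => by ring

private lemma aux_trace_eq {n : Type*} [Fintype n] [DecidableEq n] (A : Matrix n n ℝ)
    (hA : A.IsHermitian) : A.trace = ∑ i, hA.eigenvalues i := by
  nth_rewrite 1 [hA.spectral_theorem]
  rw [Unitary.conjStarAlgAut_apply]
  rw [Matrix.trace_mul_cycle]
  simp [Unitary.coe_star_mul_self, Matrix.trace_diagonal]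

/-- log of det is at most d * log(trace/d) for a positive definite matrix. -/
private lemma aux_logdet_le {d : ℕ} (hd : 0 < d) (A : Matrix (Fin d) (Fin d) ℝ)
    (hA : A.PosDef) : Real.log A.det ≤ d * Real.log (A.trace / d) := by
  set e := hA.isHermitian.eigenvalues with he
  have hepos : ∀ i, 0 < e i := hA.eigenvalues_pos
  have hdet : A.det = ∏ i, e i := by simpa using hA.isHermitian.det_eq_prod_eigenvalues
  have htr : A.trace = ∑ i, e i := aux_trace_eq A hA.isHermitian
  have hdR : (0:ℝ) < d := Nat.cast_pos.mpr hd
  have amgm := Real.geom_mean_le_arith_mean_weighted Finset.univ (fun _ => 1/(d:ℝ)) e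
    (fun i _ => by positivity)
    (by simp [Finset.card_univ]; field_simp)
    (fun i _ => (hepos i).le)
  have hprodpos : 0 < ∏ i, e i ^ ((1:ℝ)/d) := Finset.prod_pos fun i _ => Real.rpow_pos_of_pos (hepos i) _
  have hdet2 : A.det = (∏ i, e i ^ ((1:ℝ)/d)) ^ d := by
    rw [hdet, ← Finset.prod_pow]
    refine Finset.prod_congr rfl fun i _ => ?_
    rw [← Real.rpow_natCast (e i ^ ((1:ℝ)/d)) d, ← Real.rpow_mul (hepos i).le]
    rw [one_div_mul_cancel hdR.ne', Real.rpow_one]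
  have hsum : ∑ i : Fin d, (1/(d:ℝ)) * e i = A.trace / d := by
    rw [htr, ← Finset.mul_sum]; ring
  rw [hdet2, Real.log_pow]
  have hlogle : Real.log (∏ i, e i ^ ((1:ℝ)/d)) ≤ Real.log (A.trace / d) :=
    Real.log_le_log hprodpos (by rw [← hsum]; exact amgm)
  exact mul_le_mul_of_nonneg_left hlogle hdR.le

/-- Truncated elliptical potential lemma: if `‖x i‖₂ ≤ L` and `Λ₀` is positive-definite, then
`∑_{i<T} min{1, ‖x i‖²_{(Λ i)⁻¹}} ≤ 2 d log((trace Λ₀ + T L²)/(d · det(Λ₀)^{1/d}))`. -/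
theorem stmt_8 {d : ℕ} (hd : 0 < d) (T : ℕ) (L : ℝ) (x : ℕ → Fin d → ℝ)
    (hx : ∀ i, Real.sqrt (∑ j, (x i j)^2) ≤ L)
    (Λ₀ : Matrix (Fin d) (Fin d) ℝ) (hΛ₀ : Λ₀.PosDef)
    (Λ : ℕ → Matrix (Fin d) (Fin d) ℝ)
    (hΛ : ∀ t, Λ t = Λ₀ + ∑ i ∈ Finset.range t, vecMulVec (x i) (x i)) :
    ∑ i ∈ Finset.range T, min 1 (x i ⬝ᵥ ((Λ i)⁻¹).mulVec (x i))
      ≤ 2 * d * Real.log ((Λ₀.trace + T * L^2) / (d * Λ₀.det ^ ((1:ℝ)/d))) := by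
  have hdR : (0:ℝ) < d := Nat.cast_pos.mpr hd
  -- positive definiteness of all Λ t
  have hPD : ∀ t, (Λ t).PosDef := by
    intro t
    rw [hΛ t]
    refine hΛ₀.add_posSemidef ?_
    refine Finset.sum_induction _ _ (fun a b ha hb => ha.add hb) Matrix.PosSemidef.zero
      (fun i _ => aux_vecMulVec_psd (x i))
  set u : ℕ → ℝ := fun i => x i ⬝ᵥ ((Λ i)⁻¹).mulVec (x i) with hu
  have hunn : ∀ i, 0 ≤ u i := by
    intro i
    simpa using ((hPD i).inv.posSemidef.re_dotProduct_nonneg (x i))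
  -- determinant recursion
  have hdetrec : ∀ t, (Λ (t+1)).det = (Λ t).det * (1 + u t) := by
    intro t
    have h1 : Λ (t+1) = Λ t + vecMulVec (x t) (x t) := by
      rw [hΛ, hΛ, Finset.sum_range_succ, add_assoc]
    rw [h1, aux_det_lemma _ (hPD t)]
  -- telescoping of log det
  have hlogtel : ∀ t, Real.log (Λ t).det =
      Real.log Λ₀.det + ∑ i ∈ Finset.range t, Real.log (1 + u i) := by
    intro t
    induction t with
    | zero => simp [hΛ 0]
    | succ t ih =>
      rw [hdetrec t, Real.log_mul (hPD t).det_pos.ne' (by have := hunn t; positivity),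
        Finset.sum_range_succ, ih]
      ring
  -- trace bound
  have hL2 : ∀ i, ∑ j, (x i j)^2 ≤ L^2 := by
    intro i
    have hs : (0:ℝ) ≤ ∑ j, (x i j)^2 := Finset.sum_nonneg fun j _ => sq_nonneg _
    have := hx i
    nlinarith [Real.sq_sqrt hs, Real.sqrt_nonneg (∑ j, (x i j)^2)]
  have htrbound : (Λ T).trace ≤ Λ₀.trace + T * L^2 := by
    rw [hΛ T, Matrix.trace_add, Matrix.trace_sum]
    have : ∀ i ∈ Finset.range T, (vecMulVec (x i) (x i)).trace ≤ L^2 := by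
      intro i _
      have : (vecMulVec (x i) (x i)).trace = ∑ j, (x i j)^2 := by
        simp [Matrix.trace, Matrix.diag, vecMulVec_apply, sq]
      rw [this]; exact hL2 i
    calc Λ₀.trace + ∑ i ∈ Finset.range T, (vecMulVec (x i) (x i)).trace
        ≤ Λ₀.trace + ∑ i ∈ Finset.range T, L^2 :=
          add_le_add_right (Finset.sum_le_sum this) _
      _ = Λ₀.trace + T * L^2 := by rw [Finset.sum_const, Finset.card_range]; ring
  -- positivity facts
  have htrTpos : 0 < (Λ T).trace := by
    rw [aux_trace_eq _ (hPD T).isHermitian]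
    have : Nonempty (Fin d) := Fin.pos_iff_nonempty.mp hd
    exact Finset.sum_pos (fun i _ => (hPD T).eigenvalues_pos i) Finset.univ_nonempty
  have hcpos : 0 < Λ₀.trace + T * L^2 := lt_of_lt_of_le htrTpos htrbound
  have hdet0pos : 0 < Λ₀.det := hΛ₀.det_pos
  -- main chain
  have step1 : ∑ i ∈ Finset.range T, min 1 (u i)
      ≤ 2 * (Real.log (Λ T).det - Real.log Λ₀.det) := by
    have h1 : ∑ i ∈ Finset.range T, min 1 (u i)
        ≤ ∑ i ∈ Finset.range T, 2 * Real.log (1 + u i) :=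
      Finset.sum_le_sum fun i _ => aux_min_le_log (u i) (hunn i)
    rw [← Finset.mul_sum] at h1
    rw [hlogtel T]
    linarith
  have step2 : Real.log (Λ T).det ≤ d * Real.log ((Λ₀.trace + T * L^2) / d) := by
    refine le_trans (aux_logdet_le hd _ (hPD T)) ?_
    refine mul_le_mul_of_nonneg_left ?_ hdR.le
    exact Real.log_le_log (by positivity) (by gcongr)
  -- rewrite the RHS
  have hrhs : 2 * d * Real.log ((Λ₀.trace + T * L^2) / (d * Λ₀.det ^ ((1:ℝ)/d)))
      = 2 * (d * Real.log ((Λ₀.trace + T * L^2) / d)) - 2 * Real.log Λ₀.det := by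
    have hrp : (0:ℝ) < Λ₀.det ^ ((1:ℝ)/d) := Real.rpow_pos_of_pos hdet0pos _
    rw [Real.log_div hcpos.ne' (by positivity), Real.log_mul hdR.ne' hrp.ne',
      Real.log_rpow hdet0pos, Real.log_div hcpos.ne' hdR.ne']
    field_simp
    ring
  rw [hrhs]
  linarith
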